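/- Suppose F has a density f on [0,1] with 0 < f_min ≤ f(x) ≤ f_max < ∞ for all x ∈ [0,1]. Then for every positive integer m, f_min/(m+1) ≤ sup_{x ∈ [0,1]} |F^{(m)}(x) − F(x)| ≤ f_max · √(2π)/√m. -/

import Mathlib

open MeasureTheory ProbabilityTheory Real

noncomputable section

/-- pmf of Binomial(m, s) at k. -/
def binomPMFr (m k : ℕ) (s : ℝ) : ℝ := (m.choose k : ℝ) * s ^ k * (1 - s) ^ (m - k)

/-- Law of ŝ = X/m where X ~ Binomial(m, s). -/
def binomLaw (m : ℕ) (s : ℝ) : Measure ℝ :=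
  ∑ k ∈ Finset.range (m + 1), ENNReal.ofReal (binomPMFr m k s) • Measure.dirac ((k : ℝ) / m)

/-- Binomial-mixture law of ŝ where s ~ μ. -/
def mixLaw (μ : Measure ℝ) (m : ℕ) : Measure ℝ := μ.bind (binomLaw m)

/-- CDF of a measure. -/
def cdfOf (μ : Measure ℝ) (x : ℝ) : ℝ := (μ (Set.Iic x)).toReal

/-- Distribution on `[0,1]` with Lebesgue density `f`. -/
def densityMeasure (f : ℝ → ℝ) : Measure ℝ :=
  (volume.restrict (Set.Icc (0:ℝ) 1)).withDensity fun x => ENNReal.ofReal (f x)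

open Set

lemma pmf_nonneg {m k : ℕ} {s : ℝ} (hs : s ∈ Set.Icc (0:ℝ) 1) : 0 ≤ binomPMFr m k s := by
  obtain ⟨h0, h1⟩ := hs
  have : (0:ℝ) ≤ 1 - s := by linarith
  unfold binomPMFr; positivity

lemma aeval_bp (m k : ℕ) (s : ℝ) :
    Polynomial.aeval s (bernsteinPolynomial ℝ m k) = binomPMFr m k s := by
  unfold bernsteinPolynomial binomPMFr
  simp only [nsmul_eq_mul, map_mul, map_pow, map_sub, map_one, Polynomial.aeval_X,
    map_natCast, Polynomial.aeval_natCast]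
  try ring

lemma pmf_sum (m : ℕ) (s : ℝ) : ∑ k ∈ Finset.range (m+1), binomPMFr m k s = 1 := by
  have := bernsteinPolynomial.sum ℝ m
  apply_fun (Polynomial.aeval s) at this
  simp only [map_sum, map_one, aeval_bp] at this
  exact this

lemma pmf_var (m : ℕ) (s : ℝ) :
    ∑ k ∈ Finset.range (m+1), ((k:ℝ) - m*s)^2 * binomPMFr m k s = m * s * (1 - s) := by
  have := bernsteinPolynomial.variance ℝ m
  apply_fun (Polynomial.aeval s) at this
  simp only [map_sum, map_mul, map_pow, map_sub, Polynomial.aeval_X, nsmul_eq_mul,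
    map_natCast, map_one, Polynomial.aeval_natCast, aeval_bp] at this
  rw [← this]
  apply Finset.sum_congr rfl
  intro k _
  try ring

lemma pmf_cheby {m : ℕ} (hm : 1 ≤ m) {s t : ℝ} (hs : s ∈ Set.Icc (0:ℝ) 1) (ht : 0 < t)
    (S : Finset ℕ) (hS : S ⊆ Finset.range (m+1)) (hdev : ∀ k ∈ S, t ≤ |(k:ℝ)/m - s|) :
    ∑ k ∈ S, binomPMFr m k s ≤ 1 / (4 * m * t^2) := by
  have hm0 : (0:ℝ) < m := by exact_mod_cast hm
  have key : ∀ k ∈ S, binomPMFr m k s ≤ ((k:ℝ) - m*s)^2 / (m^2 * t^2) * binomPMFr m k s := by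
    intro k hk
    have h1 : t ≤ |(k:ℝ)/m - s| := hdev k hk
    have h2 : (m:ℝ)*t ≤ |(k:ℝ) - m*s| := by
      have := abs_mul ((k:ℝ)/m - s) m
      rw [abs_of_pos hm0] at this
      have he : ((k:ℝ)/m - s) * m = (k:ℝ) - m*s := by field_simp
      rw [he] at this
      rw [this, mul_comm]
      exact mul_le_mul_of_nonneg_right h1 hm0.le
    have h3 : (m:ℝ)^2*t^2 ≤ ((k:ℝ) - m*s)^2 := by
      have := sq_abs ((k:ℝ) - m*s)
      nlinarith [abs_nonneg ((k:ℝ) - m*s), mul_pos hm0 ht]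
    have h4 : (1:ℝ) ≤ ((k:ℝ) - m*s)^2 / (m^2 * t^2) := by
      rw [le_div_iff₀ (by positivity)]
      linarith
    nlinarith [pmf_nonneg (m := m) (k := k) hs, h4]
  calc ∑ k ∈ S, binomPMFr m k s
      ≤ ∑ k ∈ S, ((k:ℝ) - m*s)^2 / (m^2 * t^2) * binomPMFr m k s := Finset.sum_le_sum key
    _ ≤ ∑ k ∈ Finset.range (m+1), ((k:ℝ) - m*s)^2 / (m^2 * t^2) * binomPMFr m k s := by
        apply Finset.sum_le_sum_of_subset_of_nonneg hS
        intro k _ _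
        have := pmf_nonneg (m := m) (k := k) hs
        positivity
    _ = (∑ k ∈ Finset.range (m+1), ((k:ℝ) - m*s)^2 * binomPMFr m k s) / (m^2 * t^2) := by
        rw [Finset.sum_div]; apply Finset.sum_congr rfl; intros; ring
    _ = m * s * (1-s) / (m^2 * t^2) := by rw [pmf_var]
    _ ≤ 1 / (4 * m * t^2) := by
        rw [div_le_div_iff₀ (by positivity) (by positivity)]
        have h1 : s * (1-s) ≤ 1/4 := by nlinarith [hs.1, hs.2, sq_nonneg (s - 1/2)]
        have : m * (s * (1-s)) * (4 * m * t^2) ≤ m * (1/4) * (4*m*t^2) := by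
          apply mul_le_mul_of_nonneg_right _ (by positivity)
          apply mul_le_mul_of_nonneg_left h1 hm0.le
        nlinarith [this]

def Bsum (m : ℕ) (x s : ℝ) : ℝ :=
  ∑ k ∈ Finset.range (m+1), if (k:ℝ)/m ≤ x then binomPMFr m k s else 0

lemma Bsum_continuous (m : ℕ) (x : ℝ) : Continuous (Bsum m x) := by
  apply continuous_finset_sum
  intro k _
  split_ifs
  · unfold binomPMFr; continuity
  · exact continuous_const

lemma Bsum_nonneg {m : ℕ} {x s : ℝ} (hs : s ∈ Set.Icc (0:ℝ) 1) : 0 ≤ Bsum m x s := by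
  apply Finset.sum_nonneg
  intro k _
  split_ifs
  · exact pmf_nonneg hs
  · exact le_refl 0

lemma Bsum_le_one {m : ℕ} {x s : ℝ} (hs : s ∈ Set.Icc (0:ℝ) 1) : Bsum m x s ≤ 1 := by
  rw [← pmf_sum m s]
  apply Finset.sum_le_sum
  intro k _
  split_ifs
  · exact le_refl _
  · exact pmf_nonneg hs

lemma Bsum_dev {m : ℕ} (hm : 1 ≤ m) {x s : ℝ} (hs : s ∈ Set.Icc (0:ℝ) 1) (hne : s ≠ x) :
    |Bsum m x s - (if s ≤ x then 1 else 0)| ≤ min 1 (1 / (4 * m * (s - x)^2)) := by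
  have hm0 : (0:ℝ) < m := by exact_mod_cast hm
  have hb0 := Bsum_nonneg (m := m) (x := x) hs
  have hb1 := Bsum_le_one (m := m) (x := x) hs
  rcases le_or_gt s x with hsx | hsx
  · have hsx' : s < x := lt_of_le_of_ne hsx hne
    rw [if_pos hsx]
    have key : 1 - Bsum m x s
        = ∑ k ∈ (Finset.range (m+1)).filter (fun k : ℕ => ¬ ((k:ℝ)/m ≤ x)), binomPMFr m k s := by
      have := Finset.sum_filter_add_sum_filter_not (Finset.range (m+1))
        (fun k : ℕ => ((k:ℝ)/m ≤ x)) (binomPMFr m · s)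
      rw [pmf_sum m s] at this
      have hf : Bsum m x s
          = ∑ k ∈ (Finset.range (m+1)).filter (fun k : ℕ => ((k:ℝ)/m ≤ x)), binomPMFr m k s := by
        rw [Finset.sum_filter]; rfl
      linarith
    rw [abs_sub_comm, abs_of_nonneg (by linarith), key]
    apply le_min
    · rw [← key]; linarith
    · have : (s-x)^2 = (x-s)^2 := by ring
      rw [this]
      apply pmf_cheby hm hs (by linarith : (0:ℝ) < x - s) _ (Finset.filter_subset _ _)
      intro k hk
      rw [Finset.mem_filter] at hk
      have : x < (k:ℝ)/m := lt_of_not_ge hk.2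
      rw [abs_of_pos (by linarith)]
      linarith
  · rw [if_neg (not_le.mpr hsx), sub_zero, abs_of_nonneg hb0]
    apply le_min hb1
    have hf : Bsum m x s
        = ∑ k ∈ (Finset.range (m+1)).filter (fun k : ℕ => ((k:ℝ)/m ≤ x)), binomPMFr m k s := by
      rw [Finset.sum_filter]; rfl
    rw [hf]
    apply pmf_cheby hm hs (by linarith : (0:ℝ) < s - x) _ (Finset.filter_subset _ _)
    intro k hk
    rw [Finset.mem_filter] at hk
    rw [abs_sub_comm, abs_of_nonneg (by linarith [hk.2])]
    linarith [hk.2]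

lemma ftc_piece {m : ℕ} (hm : 1 ≤ m) {x a b : ℝ} (hab : a ≤ b) (hx : x ∉ Icc a b) :
    ∫ s in Icc a b, 1/(4*(m:ℝ)*(s-x)^2)
      = -(1/(4*(m:ℝ)*(b-x))) + 1/(4*(m:ℝ)*(a-x)) := by
  have hm0 : (0:ℝ) < m := by exact_mod_cast hm
  have hne : ∀ s ∈ Icc a b, s - x ≠ 0 := by
    intro s hs
    intro h
    apply hx
    rwa [sub_eq_zero.mp h] at hs
  have hderiv : ∀ s ∈ Set.uIcc a b, HasDerivAt (fun s => -(1/(4*(m:ℝ)*(s-x))))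
      (1/(4*(m:ℝ)*(s-x)^2)) s := by
    intro s hs
    rw [Set.uIcc_of_le hab] at hs
    have h0 : (4*(m:ℝ)*(s-x)) ≠ 0 := by
      have := hne s hs
      positivity
    have d1 : HasDerivAt (fun s : ℝ => 4*(m:ℝ)*(s-x)) (4*(m:ℝ)) s := by
      simpa using ((hasDerivAt_id s).sub_const x).const_mul (4*(m:ℝ))
    have d2 := (d1.inv h0).neg
    have heq : (fun s : ℝ => -(1/(4*(m:ℝ)*(s-x)))) = (fun s : ℝ => -(4*(m:ℝ)*(s-x))⁻¹) := by
      funext t; rw [one_div]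
    rw [heq]
    refine HasDerivAt.congr_deriv d2 ?_
    have hsx := hne s hs
    field_simp
  have hcont : ContinuousOn (fun s => 1/(4*(m:ℝ)*(s-x)^2)) (Set.uIcc a b) := by
    rw [Set.uIcc_of_le hab]
    apply ContinuousOn.div continuousOn_const
    · fun_prop
    · intro s hs
      have := hne s hs
      positivity
  have hint : IntervalIntegrable (fun s => 1/(4*(m:ℝ)*(s-x)^2)) volume a b :=
    hcont.intervalIntegrable
  have := intervalIntegral.integral_eq_sub_of_hasDerivAt hderiv hint
  rw [MeasureTheory.integral_Icc_eq_integral_Ioc,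
    ← intervalIntegral.integral_of_le hab, this]
  ring

lemma g_meas (m : ℕ) (x : ℝ) : Measurable (fun s : ℝ => min 1 (1/(4*(m:ℝ)*(s-x)^2))) := by
  apply measurable_const.min
  simp only [one_div]
  exact ((((measurable_id.sub measurable_const).pow measurable_const).const_mul
    (4*(m:ℝ)))).inv

lemma g_int (m : ℕ) (x : ℝ) {S : Set ℝ} (hS : MeasurableSet S) (hSfin : volume S ≠ ⊤) :
    IntegrableOn (fun s : ℝ => min 1 (1/(4*(m:ℝ)*(s-x)^2))) S := by
  apply Integrable.mono' (integrableOn_const (C := (1:ℝ)) hSfin)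
    ((g_meas m x).aestronglyMeasurable)
  filter_upwards with s
  rw [Real.norm_eq_abs, abs_of_nonneg (le_min zero_le_one (by positivity))]
  exact min_le_left _ _

lemma h_int_side {m : ℕ} (hm : 1 ≤ m) {x a b : ℝ} (hab : a ≤ b) (hx : x ∉ Icc a b) :
    IntegrableOn (fun s : ℝ => 1/(4*(m:ℝ)*(s-x)^2)) (Icc a b) := by
  have hm0 : (0:ℝ) < m := by exact_mod_cast hm
  apply ContinuousOn.integrableOn_compact isCompact_Icc
  apply ContinuousOn.div continuousOn_const
  · fun_prop
  · intro s hs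
    have : s - x ≠ 0 := fun h => hx (by rwa [sub_eq_zero.mp h] at hs)
    positivity

lemma intg_bound {m : ℕ} (hm : 1 ≤ m) {x : ℝ} (hx : x ∈ Icc (0:ℝ) 1) :
    ∫ s in Icc (0:ℝ) 1, min 1 (1/(4*(m:ℝ)*(s-x)^2)) ≤ 2 / Real.sqrt m := by
  have hm0 : (0:ℝ) < m := by exact_mod_cast hm
  set c := Real.sqrt m with hc_def
  have hc : 0 < c := Real.sqrt_pos.mpr hm0
  have hc2 : c^2 = m := Real.sq_sqrt hm0.le
  set T : ℝ := 1/(2*c) with hT_def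
  have hT : 0 < T := by positivity
  set g : ℝ → ℝ := fun s => min 1 (1/(4*(m:ℝ)*(s-x)^2)) with hg_def
  have hg0 : ∀ s, 0 ≤ g s := fun s => le_min zero_le_one (by positivity)
  have hg1 : ∀ s, g s ≤ 1 := fun s => min_le_left _ _
  have hgh : ∀ s, g s ≤ 1/(4*(m:ℝ)*(s-x)^2) := fun s => min_le_right _ _
  -- split
  have hsplit : ∫ s in Icc (0:ℝ) 1, g s
      = (∫ s in Icc (0:ℝ) 1 ∩ Icc (x-T) (x+T), g s)
        + ∫ s in Icc (0:ℝ) 1 \ Icc (x-T) (x+T), g s := by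
    rw [integral_inter_add_diff measurableSet_Icc
      (g_int m x measurableSet_Icc (by simp))]
  -- middle piece
  have hmid : (∫ s in Icc (0:ℝ) 1 ∩ Icc (x-T) (x+T), g s) ≤ 2*T := by
    have hmeas : MeasurableSet (Icc (0:ℝ) 1 ∩ Icc (x-T) (x+T)) :=
      measurableSet_Icc.inter measurableSet_Icc
    calc (∫ s in Icc (0:ℝ) 1 ∩ Icc (x-T) (x+T), g s)
        ≤ ∫ _ in Icc (0:ℝ) 1 ∩ Icc (x-T) (x+T), (1:ℝ) := by
          apply setIntegral_mono_on
            ((g_int m x measurableSet_Icc (by simp)).mono_set inter_subset_left)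
            (integrableOn_const ?_) hmeas (fun s _ => hg1 s)
          exact (lt_of_le_of_lt (measure_mono inter_subset_left) (by simp)).ne
      _ = (volume (Icc (0:ℝ) 1 ∩ Icc (x-T) (x+T))).toReal := by
          rw [setIntegral_const]; simp; rfl
      _ ≤ 2*T := by
          have h1 : volume (Icc (0:ℝ) 1 ∩ Icc (x-T) (x+T)) ≤ ENNReal.ofReal (2*T) := by
            refine le_trans (measure_mono inter_subset_right) ?_
            rw [Real.volume_Icc]
            apply ENNReal.ofReal_le_ofReal
            ring_nf
            linarith
          exact le_trans (ENNReal.toReal_le_of_le_ofReal (by positivity) h1) le_rfl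
  -- side pieces
  have hside : ∀ a b : ℝ, a ≤ b → x ∉ Icc a b → Icc (0:ℝ) 1 ∩ Iio (x-T) ⊆ Icc a b ∨ True → True := fun _ _ _ _ _ => trivial
  have hL : (∫ s in Icc (0:ℝ) 1 ∩ Iio (x-T), g s) ≤ 1/(4*m*T) := by
    rcases le_or_gt (x-T) 0 with hle | hlt
    · have hempty : Icc (0:ℝ) 1 ∩ Iio (x-T) = ∅ := by
        ext s; simp only [mem_inter_iff, mem_Icc, mem_Iio, mem_empty_iff_false, iff_false]
        rintro ⟨⟨h0, _⟩, h2⟩; linarith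
      rw [hempty]
      simp only [Measure.restrict_empty, integral_zero_measure]
      positivity
    · have hsub : Icc (0:ℝ) 1 ∩ Iio (x-T) ⊆ Icc 0 (x-T) := by
        rintro s ⟨⟨h0, _⟩, h2⟩; exact ⟨h0, h2.le⟩
      have hxnot : x ∉ Icc (0:ℝ) (x-T) := by
        simp only [mem_Icc, not_and, not_le]; intro _; linarith
      have hint := h_int_side hm (le_of_lt hlt) hxnot
      have hmeasL : MeasurableSet (Icc (0:ℝ) 1 ∩ Iio (x-T)) :=
        measurableSet_Icc.inter measurableSet_Iio
      calc (∫ s in Icc (0:ℝ) 1 ∩ Iio (x-T), g s)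
          ≤ ∫ s in Icc (0:ℝ) 1 ∩ Iio (x-T), 1/(4*(m:ℝ)*(s-x)^2) := by
            apply setIntegral_mono_on
              ((g_int m x measurableSet_Icc (by simp)).mono_set inter_subset_left)
              (hint.mono_set hsub) hmeasL (fun s _ => hgh s)
        _ ≤ ∫ s in Icc (0:ℝ) (x-T), 1/(4*(m:ℝ)*(s-x)^2) := by
            apply setIntegral_mono_set hint
            · filter_upwards with s; positivity
            · exact HasSubset.Subset.eventuallyLE hsub
        _ = -(1/(4*(m:ℝ)*((x-T)-x))) + 1/(4*(m:ℝ)*(0-x)) := ftc_piece hm (le_of_lt hlt) hxnot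
        _ ≤ 1/(4*m*T) := by
            have hx0 : 0 < x := by linarith
            have e1 : -(1/(4*(m:ℝ)*((x-T)-x))) = 1/(4*m*T) := by
              rw [show (x-T)-x = -T by ring]
              rw [show 4*(m:ℝ)*(-T) = -(4*m*T) by ring]
              rw [div_neg, neg_neg]
            rw [e1]
            have : 1/(4*(m:ℝ)*(0-x)) ≤ 0 := by
              apply div_nonpos_of_nonneg_of_nonpos zero_le_one
              nlinarith
            linarith
  have hR : (∫ s in Icc (0:ℝ) 1 ∩ Ioi (x+T), g s) ≤ 1/(4*m*T) := by
    rcases le_or_gt 1 (x+T) with hle | hlt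
    · have hempty : Icc (0:ℝ) 1 ∩ Ioi (x+T) = ∅ := by
        ext s; simp only [mem_inter_iff, mem_Icc, mem_Ioi, mem_empty_iff_false, iff_false]
        rintro ⟨⟨_, h1⟩, h2⟩; linarith
      rw [hempty]
      simp only [Measure.restrict_empty, integral_zero_measure]
      positivity
    · have hsub : Icc (0:ℝ) 1 ∩ Ioi (x+T) ⊆ Icc (x+T) 1 := by
        rintro s ⟨⟨_, h1⟩, h2⟩; exact ⟨h2.le, h1⟩
      have hxnot : x ∉ Icc (x+T) 1 := by
        simp only [mem_Icc, not_and, not_le]; intro h; linarith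
      have hint := h_int_side hm (le_of_lt hlt) hxnot
      have hmeasR : MeasurableSet (Icc (0:ℝ) 1 ∩ Ioi (x+T)) :=
        measurableSet_Icc.inter measurableSet_Ioi
      calc (∫ s in Icc (0:ℝ) 1 ∩ Ioi (x+T), g s)
          ≤ ∫ s in Icc (0:ℝ) 1 ∩ Ioi (x+T), 1/(4*(m:ℝ)*(s-x)^2) := by
            apply setIntegral_mono_on
              ((g_int m x measurableSet_Icc (by simp)).mono_set inter_subset_left)
              (hint.mono_set hsub) hmeasR (fun s _ => hgh s)
        _ ≤ ∫ s in Icc (x+T) 1, 1/(4*(m:ℝ)*(s-x)^2) := by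
            apply setIntegral_mono_set hint
            · filter_upwards with s; positivity
            · exact HasSubset.Subset.eventuallyLE hsub
        _ = -(1/(4*(m:ℝ)*(1-x))) + 1/(4*(m:ℝ)*((x+T)-x)) := ftc_piece hm (le_of_lt hlt) hxnot
        _ ≤ 1/(4*m*T) := by
            have hx1 : x < 1 := by linarith
            have e1 : 1/(4*(m:ℝ)*((x+T)-x)) = 1/(4*m*T) := by
              rw [show (x+T)-x = T by ring]
            rw [e1]
            have hm0' : (0:ℝ) < 4*(m:ℝ)*(1-x) := by
              have : (0:ℝ) < 1 - x := by linarith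
              positivity
            have : 0 ≤ 1/(4*(m:ℝ)*(1-x)) := by positivity
            linarith
  -- diff piece
  have hdiffset : Icc (0:ℝ) 1 \ Icc (x-T) (x+T)
      = (Icc (0:ℝ) 1 ∩ Iio (x-T)) ∪ (Icc (0:ℝ) 1 ∩ Ioi (x+T)) := by
    ext s
    simp only [mem_diff, mem_Icc, not_and, not_le, mem_union, mem_inter_iff, mem_Iio, mem_Ioi]
    constructor
    · rintro ⟨⟨h0, h1⟩, h2⟩
      rcases lt_or_ge s (x-T) with h | h
      · exact Or.inl ⟨⟨h0, h1⟩, h⟩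
      · exact Or.inr ⟨⟨h0, h1⟩, h2 h⟩
    · rintro (⟨hs, h⟩ | ⟨hs, h⟩)
      · exact ⟨hs, fun h' => absurd h' (not_le.mpr (by linarith))⟩
      · exact ⟨hs, fun _ => h⟩
  have hdiff : (∫ s in Icc (0:ℝ) 1 \ Icc (x-T) (x+T), g s) ≤ 1/(4*m*T) + 1/(4*m*T) := by
    rw [hdiffset, setIntegral_union]
    · exact add_le_add hL hR
    · apply Disjoint.mono inter_subset_right inter_subset_right
      exact (Iic_disjoint_Ioi (by linarith : x-T ≤ x+T)).mono Iio_subset_Iic_self le_rfl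
    · exact measurableSet_Icc.inter measurableSet_Ioi
    · exact (g_int m x measurableSet_Icc (by simp)).mono_set inter_subset_left
    · exact (g_int m x measurableSet_Icc (by simp)).mono_set inter_subset_left
  -- combine
  rw [hsplit]
  have heq : 2*T + (1/(4*m*T) + 1/(4*m*T)) = 2/c := by
    rw [hT_def, ← hc2]
    field_simp
    ring
  linarith [hmid, hdiff]

lemma pmf_meas (m k : ℕ) : Measurable (fun s : ℝ => binomPMFr m k s) := by
  unfold binomPMFr; fun_prop

lemma binomLaw_meas (m : ℕ) : Measurable (binomLaw m) := by
  apply Measure.measurable_of_measurable_coe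
  intro S hS
  have : (fun s => binomLaw m s S)
      = fun s => ∑ k ∈ Finset.range (m+1),
          ENNReal.ofReal (binomPMFr m k s) * S.indicator 1 ((k:ℝ)/m) := by
    funext s
    unfold binomLaw
    rw [Measure.finset_sum_apply]
    apply Finset.sum_congr rfl
    intro k _
    rw [Measure.smul_apply, smul_eq_mul, Measure.dirac_apply' _ hS]
  rw [this]
  apply Finset.measurable_sum
  intro k _
  exact (ENNReal.measurable_ofReal.comp (pmf_meas m k)).mul_const _

lemma binomLaw_apply_Iic {m : ℕ} {s x : ℝ} (hs : s ∈ Set.Icc (0:ℝ) 1) :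
    binomLaw m s (Set.Iic x) = ENNReal.ofReal (Bsum m x s) := by
  unfold binomLaw Bsum
  rw [Measure.finset_sum_apply, ENNReal.ofReal_sum_of_nonneg]
  · apply Finset.sum_congr rfl
    intro k _
    rw [Measure.smul_apply, smul_eq_mul, Measure.dirac_apply' _ measurableSet_Iic]
    by_cases h : (k:ℝ)/m ≤ x
    · rw [if_pos h, Set.indicator_of_mem (by exact h : (k:ℝ)/m ∈ Set.Iic x)]
      simp
    · rw [if_neg h, Set.indicator_of_notMem (by exact h : (k:ℝ)/m ∉ Set.Iic x)]
      simp
  · intro k _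
    split_ifs
    · exact pmf_nonneg hs
    · exact le_refl 0

section frepr
variable {f : ℝ → ℝ}

lemma f_integrable (hdens : ∫ x in Set.Icc (0:ℝ) 1, f x = 1) :
    IntegrableOn f (Set.Icc (0:ℝ) 1) := by
  by_contra h
  rw [MeasureTheory.integral_undef h] at hdens
  norm_num at hdens

lemma fw_int (hdens : ∫ x in Set.Icc (0:ℝ) 1, f x = 1) {w : ℝ → ℝ} (hw : Measurable w)
    (hwb : ∀ᵐ s ∂(volume.restrict (Set.Icc (0:ℝ) 1)), |w s| ≤ 1) :
    Integrable (fun s => f s * w s) (volume.restrict (Set.Icc (0:ℝ) 1)) := by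
  have h := Integrable.bdd_mul (c := 1) (f_integrable hdens) hw.aestronglyMeasurable
    (by filter_upwards [hwb] with s hs; rwa [Real.norm_eq_abs])
  have : (fun s => f s * w s) = fun s => w s * f s := by funext s; ring
  rw [this]
  exact h

lemma key_repr (hdens : ∫ x in Set.Icc (0:ℝ) 1, f x = 1)
    (hf0 : 0 ≤ᵐ[volume.restrict (Set.Icc (0:ℝ) 1)] f)
    {w : ℝ → ℝ} (hw : Measurable w)
    (hwb : ∀ᵐ s ∂(volume.restrict (Set.Icc (0:ℝ) 1)), |w s| ≤ 1)
    (hw0 : 0 ≤ᵐ[volume.restrict (Set.Icc (0:ℝ) 1)] w) :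
    (∫⁻ s, ENNReal.ofReal (f s) * ENNReal.ofReal (w s)
        ∂(volume.restrict (Set.Icc (0:ℝ) 1))).toReal
      = ∫ s in Set.Icc (0:ℝ) 1, f s * w s := by
  have h0 : 0 ≤ᵐ[volume.restrict (Set.Icc (0:ℝ) 1)] fun s => f s * w s := by
    filter_upwards [hf0, hw0] with s h1 h2; exact mul_nonneg h1 h2
  rw [MeasureTheory.integral_eq_lintegral_of_nonneg_ae h0
    (fw_int hdens hw hwb).aestronglyMeasurable]
  congr 1
  apply lintegral_congr_ae
  filter_upwards [hf0] with s h
  rw [ENNReal.ofReal_mul h]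

lemma cdf_density (hdens : ∫ x in Set.Icc (0:ℝ) 1, f x = 1)
    (hf0 : 0 ≤ᵐ[volume.restrict (Set.Icc (0:ℝ) 1)] f) (x : ℝ) :
    cdfOf (densityMeasure f) x = ∫ s in Set.Icc (0:ℝ) 1, f s * (if s ≤ x then 1 else 0) := by
  unfold cdfOf densityMeasure
  rw [withDensity_apply _ measurableSet_Iic]
  rw [← lintegral_indicator measurableSet_Iic]
  rw [← key_repr hdens hf0 (w := fun s => if s ≤ x then 1 else 0)
    (by apply Measurable.ite measurableSet_Iic <;> exact measurable_const)
    (Filter.Eventually.of_forall (fun s => by split_ifs <;> norm_num))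
    (Filter.Eventually.of_forall (fun s => by simp only [Pi.zero_apply]; split_ifs <;> norm_num))]
  congr 1
  apply lintegral_congr
  intro s
  by_cases h : s ≤ x
  · rw [Set.indicator_of_mem (by exact h : s ∈ Set.Iic x), if_pos h]
    simp
  · rw [Set.indicator_of_notMem (by exact h : s ∉ Set.Iic x), if_neg h]
    simp

lemma cdf_mix (hdens : ∫ x in Set.Icc (0:ℝ) 1, f x = 1)
    (hf0 : 0 ≤ᵐ[volume.restrict (Set.Icc (0:ℝ) 1)] f)
    (m : ℕ) (hBb : ∀ x s, s ∈ Set.Icc (0:ℝ) 1 → |Bsum m x s| ≤ 1)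
    (hB0 : ∀ x s, s ∈ Set.Icc (0:ℝ) 1 → 0 ≤ Bsum m x s)
    (hBm : ∀ x, Measurable (Bsum m x)) (x : ℝ) :
    cdfOf (mixLaw (densityMeasure f) m) x
      = ∫ s in Set.Icc (0:ℝ) 1, f s * Bsum m x s := by
  have hfae : AEMeasurable (fun s => ENNReal.ofReal (f s))
      (volume.restrict (Set.Icc (0:ℝ) 1)) :=
    ENNReal.measurable_ofReal.comp_aemeasurable
      (f_integrable hdens).aestronglyMeasurable.aemeasurable
  have hgmeas : Measurable (fun s => binomLaw m s (Set.Iic x)) :=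
    (Measure.measurable_coe measurableSet_Iic).comp (binomLaw_meas m)
  unfold cdfOf mixLaw
  rw [Measure.bind_apply measurableSet_Iic (binomLaw_meas m).aemeasurable]
  unfold densityMeasure
  rw [lintegral_withDensity_eq_lintegral_mul₀ hfae hgmeas.aemeasurable]
  rw [← key_repr hdens hf0 (w := Bsum m x) (hBm x)
    (by filter_upwards [ae_restrict_mem measurableSet_Icc] with s hs; exact hBb x s hs)
    (by filter_upwards [ae_restrict_mem measurableSet_Icc] with s hs
        simpa using hB0 x s hs)]
  congr 1
  apply lintegral_congr_ae
  filter_upwards [ae_restrict_mem measurableSet_Icc] with s hs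
  simp only [Pi.mul_apply]
  rw [binomLaw_apply_Iic hs]
end frepr


/-- If `F` has a density `f` on `[0,1]` with `0 < f_min ≤ f ≤ f_max < ∞`,
then for every positive integer `m`,
`f_min/(m+1) ≤ sup_{x ∈ [0,1]} |F^{(m)}(x) − F(x)| ≤ f_max·√(2π)/√m`. -/
theorem stmt3 (f : ℝ → ℝ) (fmin fmax : ℝ) (hmin : 0 < fmin)
    (hbound : ∀ x ∈ Set.Icc (0:ℝ) 1, fmin ≤ f x ∧ f x ≤ fmax)
    (hdens : ∫ x in Set.Icc (0:ℝ) 1, f x = 1)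
    (m : ℕ) (hm : 1 ≤ m) :
    fmin / (m + 1)
      ≤ (⨆ x : Set.Icc (0:ℝ) 1,
          |cdfOf (mixLaw (densityMeasure f) m) x - cdfOf (densityMeasure f) x|)
    ∧ (⨆ x : Set.Icc (0:ℝ) 1,
          |cdfOf (mixLaw (densityMeasure f) m) x - cdfOf (densityMeasure f) x|)
      ≤ fmax * Real.sqrt (2 * π) / Real.sqrt m := by
  have hm0 : (0:ℝ) < m := by exact_mod_cast hm
  have hc : 0 < Real.sqrt m := Real.sqrt_pos.mpr hm0
  have h0mem : (0:ℝ) ∈ Set.Icc (0:ℝ) 1 := by constructor <;> norm_num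
  have hfmax0 : 0 < fmax := lt_of_lt_of_le hmin
    (le_trans (hbound 0 h0mem).1 (hbound 0 h0mem).2)
  have hf0 : 0 ≤ᵐ[volume.restrict (Set.Icc (0:ℝ) 1)] f := by
    filter_upwards [ae_restrict_mem measurableSet_Icc] with s hs
    have := (hbound s hs).1
    simp only [Pi.zero_apply]
    linarith
  have hBb : ∀ x s, s ∈ Set.Icc (0:ℝ) 1 → |Bsum m x s| ≤ 1 := fun x s hs => by
    rw [abs_of_nonneg (Bsum_nonneg hs)]; exact Bsum_le_one hs
  have hB0 : ∀ x s, s ∈ Set.Icc (0:ℝ) 1 → 0 ≤ Bsum m x s := fun x s hs => Bsum_nonneg hs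
  have hBm : ∀ x, Measurable (Bsum m x) := fun x => (Bsum_continuous m x).measurable
  have hw1meas : ∀ x : ℝ, Measurable (fun s : ℝ => if s ≤ x then (1:ℝ) else 0) := fun x => by
    apply Measurable.ite measurableSet_Iic <;> exact measurable_const
  have hw1b : ∀ x s : ℝ, |if s ≤ x then (1:ℝ) else 0| ≤ 1 := fun x s => by
    split_ifs <;> norm_num
  have hintB : ∀ x : ℝ, Integrable (fun s => f s * Bsum m x s)
      (volume.restrict (Set.Icc (0:ℝ) 1)) := fun x =>
    fw_int hdens (hBm x)
      (by filter_upwards [ae_restrict_mem measurableSet_Icc] with s hs; exact hBb x s hs)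
  have hintW : ∀ x : ℝ, Integrable (fun s => f s * (if s ≤ x then (1:ℝ) else 0))
      (volume.restrict (Set.Icc (0:ℝ) 1)) := fun x =>
    fw_int hdens (hw1meas x) (Filter.Eventually.of_forall (hw1b x))
  have hdiff : ∀ x : ℝ, cdfOf (mixLaw (densityMeasure f) m) x - cdfOf (densityMeasure f) x
      = ∫ s in Set.Icc (0:ℝ) 1, f s * (Bsum m x s - (if s ≤ x then 1 else 0)) := by
    intro x
    rw [cdf_mix hdens hf0 m hBb hB0 hBm x, cdf_density hdens hf0 x,
      ← integral_sub (hintB x) (hintW x)]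
    apply integral_congr_ae
    filter_upwards with s
    ring
  have haex : ∀ x : ℝ, ∀ᵐ s ∂(volume.restrict (Set.Icc (0:ℝ) 1)), s ≠ x := by
    intro x
    have h0 : (volume.restrict (Set.Icc (0:ℝ) 1)) {x} = 0 :=
      le_antisymm (le_trans (Measure.restrict_apply_le _ _)
        (le_of_eq Real.volume_singleton)) zero_le
    have := measure_eq_zero_iff_ae_notMem.mp h0
    filter_upwards [this] with s hs
    simpa using hs
  have hintD : ∀ x : ℝ, Integrable (fun s => f s * (Bsum m x s - (if s ≤ x then 1 else 0)))
      (volume.restrict (Set.Icc (0:ℝ) 1)) := fun x =>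
    ((hintB x).sub (hintW x)).congr (by filter_upwards with s; simp only [Pi.sub_apply]; ring)
  have hub : ∀ x : ℝ, x ∈ Set.Icc (0:ℝ) 1 →
      |cdfOf (mixLaw (densityMeasure f) m) x - cdfOf (densityMeasure f) x|
        ≤ fmax * (2 / Real.sqrt m) := by
    intro x hx
    rw [hdiff x]
    calc |∫ s in Set.Icc (0:ℝ) 1, f s * (Bsum m x s - (if s ≤ x then 1 else 0))|
        ≤ ∫ s in Set.Icc (0:ℝ) 1, |f s * (Bsum m x s - (if s ≤ x then 1 else 0))| := by
          rw [← Real.norm_eq_abs]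
          refine le_trans (norm_integral_le_integral_norm _) (le_of_eq ?_)
          apply integral_congr_ae
          filter_upwards with s
          rw [Real.norm_eq_abs]
      _ ≤ ∫ s in Set.Icc (0:ℝ) 1, fmax * min 1 (1/(4*(m:ℝ)*(s-x)^2)) := by
          apply integral_mono_ae (hintD x).abs
            ((g_int m x measurableSet_Icc (by simp)).const_mul fmax)
          filter_upwards [ae_restrict_mem measurableSet_Icc, haex x] with s hs hne
          have hd := Bsum_dev hm hs hne
          have h1 : |f s| ≤ fmax := by
            rw [abs_of_nonneg (by linarith [(hbound s hs).1])]
            exact (hbound s hs).2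
          calc |f s * (Bsum m x s - (if s ≤ x then 1 else 0))|
              = |f s| * |Bsum m x s - (if s ≤ x then 1 else 0)| := abs_mul _ _
            _ ≤ fmax * min 1 (1/(4*(m:ℝ)*(s-x)^2)) :=
                mul_le_mul h1 hd (abs_nonneg _) hfmax0.le
      _ = fmax * ∫ s in Set.Icc (0:ℝ) 1, min 1 (1/(4*(m:ℝ)*(s-x)^2)) := by
          simp_rw [← smul_eq_mul]
          rw [integral_smul]
      _ ≤ fmax * (2 / Real.sqrt m) :=
          mul_le_mul_of_nonneg_left (intg_bound hm hx) hfmax0.le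
  have h2pi : (2:ℝ) ≤ Real.sqrt (2*π) := by
    have hpi := Real.pi_gt_three
    have h1 : (0:ℝ) ≤ 2*π := by linarith
    have h2 := Real.sq_sqrt h1
    have h3 := Real.sqrt_nonneg (2*π)
    nlinarith
  haveI : Nonempty (Set.Icc (0:ℝ) 1) := ⟨⟨0, h0mem⟩⟩
  have hfinal_ub : ∀ x : Set.Icc (0:ℝ) 1,
      |cdfOf (mixLaw (densityMeasure f) m) x - cdfOf (densityMeasure f) x|
        ≤ fmax * Real.sqrt (2*π) / Real.sqrt m := by
    intro x
    refine le_trans (hub x x.2) ?_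
    calc fmax * (2 / Real.sqrt m) ≤ fmax * (Real.sqrt (2*π) / Real.sqrt m) := by
          apply mul_le_mul_of_nonneg_left _ hfmax0.le
          gcongr
      _ = fmax * Real.sqrt (2*π) / Real.sqrt m := by ring
  constructor
  · -- lower bound
    have hbdd : BddAbove (Set.range fun x : Set.Icc (0:ℝ) 1 =>
        |cdfOf (mixLaw (densityMeasure f) m) x - cdfOf (densityMeasure f) x|) := by
      refine ⟨fmax * Real.sqrt (2*π) / Real.sqrt m, ?_⟩
      rintro y ⟨x, rfl⟩
      exact hfinal_ub x
    refine le_trans ?_ (le_ciSup hbdd ⟨0, h0mem⟩)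
    show fmin / ((m:ℝ) + 1)
      ≤ |cdfOf (mixLaw (densityMeasure f) m) 0 - cdfOf (densityMeasure f) 0|
    rw [hdiff 0]
    refine le_trans ?_ (le_abs_self _)
    have hrw : ∫ s in Set.Icc (0:ℝ) 1, f s * (Bsum m 0 s - (if s ≤ (0:ℝ) then 1 else 0))
        = ∫ s in Set.Icc (0:ℝ) 1, f s * (1-s)^m := by
      apply integral_congr_ae
      filter_upwards [ae_restrict_mem measurableSet_Icc, haex 0] with s hs hne
      have hBs : Bsum m 0 s = (1-s)^m := by
        unfold Bsum
        rw [Finset.sum_eq_single 0]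
        · rw [if_pos (by simp)]
          unfold binomPMFr
          simp
        · intro k hk hkne
          rw [if_neg]
          have hk1 : 0 < k := Nat.pos_of_ne_zero hkne
          have : (0:ℝ) < (k:ℝ)/m := div_pos (by exact_mod_cast hk1) hm0
          linarith
        · intro h
          exact absurd (Finset.mem_range.mpr (Nat.succ_pos m)) h
      have hs0 : ¬ (s ≤ (0:ℝ)) := not_le.mpr (lt_of_le_of_ne hs.1 (Ne.symm hne))
      rw [hBs, if_neg hs0, sub_zero]
    rw [hrw]
    have hpow : ∫ s in Set.Icc (0:ℝ) 1, (1-s)^m = 1/((m:ℝ)+1) := by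
      rw [MeasureTheory.integral_Icc_eq_integral_Ioc,
        ← intervalIntegral.integral_of_le zero_le_one]
      have hcs := intervalIntegral.integral_comp_sub_left (a := (0:ℝ)) (b := 1)
        (fun u : ℝ => u^m) 1
      simp only [sub_zero, sub_self] at hcs
      rw [hcs, integral_pow]
      push_cast
      norm_num
    have hmono : ∫ s in Set.Icc (0:ℝ) 1, fmin * (1-s)^m
        ≤ ∫ s in Set.Icc (0:ℝ) 1, f s * (1-s)^m := by
      apply setIntegral_mono_on
      · apply Continuous.integrableOn_Icc
        exact continuous_const.mul ((continuous_const.sub continuous_id).pow m)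
      · refine fw_int hdens
          (((continuous_const.sub continuous_id).pow m).measurable) ?_
        filter_upwards [ae_restrict_mem measurableSet_Icc] with s hs
        rw [abs_of_nonneg (by nlinarith [pow_nonneg (by linarith [hs.2] : (0:ℝ) ≤ 1-s) m])]
        exact pow_le_one₀ (by linarith [hs.2]) (by linarith [hs.1])
      · exact measurableSet_Icc
      · intro s hs
        have h1 : (0:ℝ) ≤ (1-s)^m := pow_nonneg (by linarith [hs.2]) m
        exact mul_le_mul_of_nonneg_right (hbound s hs).1 h1
    have hconst : ∫ s in Set.Icc (0:ℝ) 1, fmin * (1-s)^m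
        = fmin * ∫ s in Set.Icc (0:ℝ) 1, (1-s)^m := by
      simp_rw [← smul_eq_mul]
      rw [integral_smul]
    calc fmin / ((m:ℝ) + 1) = fmin * (1/((m:ℝ)+1)) := by ring
      _ = ∫ s in Set.Icc (0:ℝ) 1, fmin * (1-s)^m := by rw [hconst, hpow]
      _ ≤ ∫ s in Set.Icc (0:ℝ) 1, f s * (1-s)^m := hmono
  · exact ciSup_le hfinal_ub
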